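/- arXiv:math/0407096 — 2 statements merged into one kernel-verified Lean document; each statement's English description precedes it below -/
import Mathlib

section
/- For each tree t with n leaves and each tree t', the word w_t, acting letterwise via the operators A_α, maps the right vine ⟨n⟩ to t, and the word w_t* maps ⟨n, t'⟩ (the tree ⟨•,…,•,t'⟩ with n single leaves followed by t') to t·t'. -/
/-- Finite rooted binary trees. -/
inductive BTree : Type
  | leaf : BTree
  | node : BTree → BTree → BTree

/-- Addresses: finite words over `{0,1}`, with `false` = 0 (left) and `true` = 1
(right). -/
abbrev Addr := List Bool

/-- The associativity operator `A`: maps `t₁·(t₂·t₃)` to `(t₁·t₂)·t₃`. -/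
def opA : BTree → Option BTree
  | .node t₁ (.node t₂ t₃) => some (.node (.node t₁ t₂) t₃)
  | _ => none

/-- `applyAt α f` applies `f` to the `α`-subtree of its argument. -/
def applyAt : Addr → (BTree → Option BTree) → BTree → Option BTree
  | [], f => f
  | false :: α, f => fun t => match t with
      | .node t₁ t₂ => (applyAt α f t₁).map (fun s => .node s t₂)
      | _ => none
  | true :: α, f => fun t => match t with
      | .node t₁ t₂ => (applyAt α f t₂).map (fun s => .node t₁ s)
      | _ => none

/-- Words in the letters `A_α`, encoded by the list of the addresses `α`. -/
abbrev Word := List Addr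

/-- Letterwise action of a word on a tree, from left to right. -/
def run : Word → BTree → Option BTree
  | [], t => some t
  | α :: w, t => (applyAt α opA t).bind (run w)

/-- `∂w`: prefix each index of the word `w` by the letter 1. -/
def shiftW (w : Word) : Word := w.map (fun α => true :: α)

/-- The pair of words `(w_t, w_t*)`, defined inductively by `w_t = w_t* = ε` for a
single leaf, and `w_{t₁t₂} = w_{t₁}* · ∂w_{t₂}`, `w_{t₁t₂}* = w_{t₁}* · ∂w_{t₂}* · A`. -/
def wtPair : BTree → Word × Word
  | .leaf => ([], [])
  | .node t₁ t₂ =>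
      ((wtPair t₁).2 ++ shiftW (wtPair t₂).1,
       (wtPair t₁).2 ++ shiftW (wtPair t₂).2 ++ [([] : Addr)])

/-- The word `w_t`. -/
def wt (t : BTree) : Word := (wtPair t).1

/-- The word `w_t*`. -/
def wts (t : BTree) : Word := (wtPair t).2

/-- The number of leaves (size) of a tree. -/
def size : BTree → ℕ
  | .leaf => 1
  | .node t₁ t₂ => size t₁ + size t₂

/-- `vineW n t` is the tree `⟨•,…,•,t⟩` with `n` single leaves followed by `t`;
in particular the right vine `⟨n⟩` is `vineW (n-1) leaf`. -/
def vineW : ℕ → BTree → BTree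
  | 0, t => t
  | n + 1, t => .node .leaf (vineW n t)

lemma run_append (w₁ w₂ : Word) (t : BTree) :
    run (w₁ ++ w₂) t = (run w₁ t).bind (run w₂) := by
  induction w₁ generalizing t with
  | nil => simp [run]
  | cons a w ih =>
    simp only [List.cons_append, run, Option.bind_assoc]
    cases applyAt a opA t <;> simp [ih]

lemma run_shift (w : Word) (t₁ t₂ : BTree) :
    run (shiftW w) (.node t₁ t₂) = (run w t₂).map (.node t₁) := by
  induction w generalizing t₂ with
  | nil => simp [run, shiftW]
  | cons a w ih =>
    simp only [shiftW, List.map_cons, run, applyAt]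
    cases applyAt a opA t₂ <;> simp [← ih, shiftW]

lemma vineW_add (m n : ℕ) (t : BTree) :
    vineW (m + n) t = vineW m (vineW n t) := by
  induction m with
  | zero => simp [vineW]
  | succ m ih => simp [Nat.succ_add, vineW, ih]

lemma size_pos (t : BTree) : 1 ≤ size t := by
  induction t with
  | leaf => simp [size]
  | node t₁ t₂ ih₁ ih₂ => simp [size]; omega

/-- Lemma 2.11: for each tree `t` of size `n` and each tree `t'`, the word `w_t`
constructs `t` from the right vine `⟨n⟩`, and the word `w_t*` constructs `t·t'`
from `⟨n, t'⟩`. -/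
theorem stmt7 (t t' : BTree) :
    run (wt t) (vineW (size t - 1) .leaf) = some t ∧
    run (wts t) (vineW (size t) t') = some (.node t t') := by
  induction t generalizing t' with
  | leaf => simp [wt, wts, wtPair, size, vineW, run, applyAt, opA]
  | node t₁ t₂ ih₁ ih₂ =>
    simp only [wt, wts] at ih₁ ih₂
    have h₁ := size_pos t₁
    have h₂ := size_pos t₂
    constructor
    · have : size (.node t₁ t₂) - 1 = size t₁ + (size t₂ - 1) := by
        simp [size]; omega
      rw [this, vineW_add]
      simp only [wt, wtPair, run_append, (ih₁ (vineW (size t₂ - 1) .leaf)).2,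
        Option.bind_some, run_shift, (ih₂ .leaf).1]
      rfl
    · have : size (.node t₁ t₂) = size t₁ + size t₂ := rfl
      rw [this, vineW_add]
      simp only [wts, wtPair, List.append_assoc, run_append,
        (ih₁ (vineW (size t₂) t')).2, Option.bind_some, run_shift,
        (ih₂ t').2]
      simp [run, applyAt, opA]
end

section
/- Let t, t' be trees and α an address such that t' = t•A_α (the operator A_α maps t to t'). Then the words w_{t'} and w_t·A_α represent the same element of the group presented by generators {A_β : β an address} and relations R_A, and likewise the words w_{t'}* and w_t*·A_{0α} represent the same element of that presented group. -/
/-- The relations `R_A`, as relators in the free group on the generators `A_α`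
(a generator being encoded by its address `α`): for all addresses `α, β, γ`,
`A_{γ0α}·A_{γ1β} = A_{γ1β}·A_{γ0α}`, `A_{γ11α}·A_γ = A_γ·A_{γ1α}`,
`A_{γ10α}·A_γ = A_γ·A_{γ01α}`, `A_{γ0α}·A_γ = A_γ·A_{γ00α}`, and the pentagon
relations `A_γ·A_γ = A_{γ1}·A_γ·A_{γ0}`. -/
def relsA : Set (FreeGroup Addr) :=
  {x | ∃ γ : Addr,
    (∃ α β : Addr, x = FreeGroup.of (γ ++ false :: α) * FreeGroup.of (γ ++ true :: β) *
        (FreeGroup.of (γ ++ true :: β) * FreeGroup.of (γ ++ false :: α))⁻¹) ∨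
    (∃ α : Addr, x = FreeGroup.of (γ ++ true :: true :: α) * FreeGroup.of γ *
        (FreeGroup.of γ * FreeGroup.of (γ ++ true :: α))⁻¹) ∨
    (∃ α : Addr, x = FreeGroup.of (γ ++ true :: false :: α) * FreeGroup.of γ *
        (FreeGroup.of γ * FreeGroup.of (γ ++ false :: true :: α))⁻¹) ∨
    (∃ α : Addr, x = FreeGroup.of (γ ++ false :: α) * FreeGroup.of γ *
        (FreeGroup.of γ * FreeGroup.of (γ ++ false :: false :: α))⁻¹) ∨
    (x = FreeGroup.of γ * FreeGroup.of γ *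
        (FreeGroup.of (γ ++ [true]) * FreeGroup.of γ * FreeGroup.of (γ ++ [false]))⁻¹)}

/-- Evaluation of a word in the letters `A_α` in the group presented by the
generators `A_α` and the relations `R_A`. -/
def evP (w : Word) : PresentedGroup relsA :=
  (w.map (fun α => (PresentedGroup.of α : PresentedGroup relsA))).prod


section Aux

open PresentedGroup

local notation "P" => PresentedGroup relsA

lemma mk_eq_of_rel {u v : FreeGroup Addr} (h : u * v⁻¹ ∈ relsA) :
    (mk relsA u : P) = mk relsA v := by
  have h1 : (mk relsA (u * v⁻¹) : P) = 1 := by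
    change (QuotientGroup.mk _ : P) = 1
    rw [QuotientGroup.eq_one_iff]
    exact Subgroup.subset_normalClosure h
  rw [map_mul, map_inv] at h1
  exact mul_inv_eq_one.mp h1

lemma rel1 (γ α β : Addr) :
    (of (γ ++ false :: α) * of (γ ++ true :: β) : P) =
      of (γ ++ true :: β) * of (γ ++ false :: α) := by
  have := mk_eq_of_rel (u := FreeGroup.of (γ ++ false :: α) * FreeGroup.of (γ ++ true :: β))
    (v := FreeGroup.of (γ ++ true :: β) * FreeGroup.of (γ ++ false :: α))
    ⟨γ, Or.inl ⟨α, β, rfl⟩⟩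
  simp only [map_mul] at this; exact this

lemma rel2 (γ α : Addr) :
    (of (γ ++ true :: true :: α) * of γ : P) = of γ * of (γ ++ true :: α) := by
  have := mk_eq_of_rel (u := FreeGroup.of (γ ++ true :: true :: α) * FreeGroup.of γ)
    (v := FreeGroup.of γ * FreeGroup.of (γ ++ true :: α))
    ⟨γ, Or.inr (Or.inl ⟨α, rfl⟩)⟩
  simp only [map_mul] at this; exact this

lemma rel3 (γ α : Addr) :
    (of (γ ++ true :: false :: α) * of γ : P) = of γ * of (γ ++ false :: true :: α) := by
  have := mk_eq_of_rel (u := FreeGroup.of (γ ++ true :: false :: α) * FreeGroup.of γ)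
    (v := FreeGroup.of γ * FreeGroup.of (γ ++ false :: true :: α))
    ⟨γ, Or.inr (Or.inr (Or.inl ⟨α, rfl⟩))⟩
  simp only [map_mul] at this; exact this

lemma rel4 (γ α : Addr) :
    (of (γ ++ false :: α) * of γ : P) = of γ * of (γ ++ false :: false :: α) := by
  have := mk_eq_of_rel (u := FreeGroup.of (γ ++ false :: α) * FreeGroup.of γ)
    (v := FreeGroup.of γ * FreeGroup.of (γ ++ false :: false :: α))
    ⟨γ, Or.inr (Or.inr (Or.inr (Or.inl ⟨α, rfl⟩)))⟩
  simp only [map_mul] at this; exact this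

lemma rel5 (γ : Addr) :
    (of γ * of γ : P) = of (γ ++ [true]) * of γ * of (γ ++ [false]) := by
  have := mk_eq_of_rel (u := FreeGroup.of γ * FreeGroup.of γ)
    (v := FreeGroup.of (γ ++ [true]) * FreeGroup.of γ * FreeGroup.of (γ ++ [false]))
    ⟨γ, Or.inr (Or.inr (Or.inr (Or.inr rfl)))⟩
  simp only [map_mul] at this; exact this

lemma evP_nil : evP [] = 1 := rfl

lemma evP_cons (a : Addr) (w : Word) : evP (a :: w) = of a * evP w := by
  simp [evP]

lemma evP_append (u v : Word) : evP (u ++ v) = evP u * evP v := by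
  simp [evP]

lemma evP_singleton (a : Addr) : evP [a] = of a := by simp [evP]

lemma shiftW_append (u v : Word) : shiftW (u ++ v) = shiftW u ++ shiftW v :=
  List.map_append

@[simp] lemma shiftW_nil : shiftW [] = [] := rfl

@[simp] lemma shiftW_cons (a : Addr) (w : Word) :
    shiftW (a :: w) = (true :: a) :: shiftW w := rfl

lemma shift_rels :
    ∀ r ∈ relsA, FreeGroup.lift (fun a => (of (true :: a) : P)) r = 1 := by
  rintro r ⟨γ, hr⟩
  rcases hr with ⟨α, β, rfl⟩ | ⟨α, rfl⟩ | ⟨α, rfl⟩ | ⟨α, rfl⟩ | rfl <;>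
    · simp only [map_mul, map_inv, FreeGroup.lift_apply_of]
      rw [mul_inv_eq_one]
      first
        | simpa only [List.cons_append] using rel1 (true :: γ) α β
        | simpa only [List.cons_append] using rel2 (true :: γ) α
        | simpa only [List.cons_append] using rel3 (true :: γ) α
        | simpa only [List.cons_append] using rel4 (true :: γ) α
        | simpa only [List.cons_append] using rel5 (true :: γ)

/-- the shift homomorphism `A_α ↦ A_{1α}` on the presented group -/
noncomputable def shiftHom : P →* P :=
  PresentedGroup.toGroup shift_rels

lemma shiftHom_of (a : Addr) : shiftHom (of a) = of (true :: a) :=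
  PresentedGroup.toGroup.of _

lemma shiftHom_evP (w : Word) : shiftHom (evP w) = evP (shiftW w) := by
  induction w with
  | nil => simp [evP_nil, shiftW]
  | cons a w ih =>
      rw [evP_cons, map_mul, shiftHom_of, ih]
      simp [shiftW, evP_cons]

lemma slide2 (w : Word) :
    (of ([] : Addr) : P) * evP (shiftW w) = evP (shiftW (shiftW w)) * of ([] : Addr) := by
  induction w with
  | nil => simp [shiftW, evP_nil]
  | cons a w ih =>
      have h2 : (of (true :: true :: a) * of ([] : Addr) : P) = of ([] : Addr) * of (true :: a) :=
        rel2 [] a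
      simp only [shiftW_cons, evP_cons]
      rw [← mul_assoc, ← h2, mul_assoc, ih, ← mul_assoc]

lemma slide_comm (δ : Addr) (w : Word) :
    (of (false :: δ) : P) * evP (shiftW w) = evP (shiftW w) * of (false :: δ) := by
  induction w with
  | nil => simp [shiftW, evP_nil]
  | cons a w ih =>
      have h1 : (of (false :: δ) * of (true :: a) : P) = of (true :: a) * of (false :: δ) :=
        rel1 [] δ a
      simp only [shiftW_cons, evP_cons]
      rw [← mul_assoc, h1, mul_assoc, ih, ← mul_assoc]

@[simp] lemma wt_leaf : wt .leaf = [] := rfl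
@[simp] lemma wts_leaf : wts .leaf = [] := rfl
@[simp] lemma wt_node (t₁ t₂ : BTree) : wt (.node t₁ t₂) = wts t₁ ++ shiftW (wt t₂) := rfl
@[simp] lemma wts_node (t₁ t₂ : BTree) :
    wts (.node t₁ t₂) = wts t₁ ++ shiftW (wts t₂) ++ [([] : Addr)] := rfl

end Aux


lemma key_root_star (w : Word) :
    (PresentedGroup.of ([] : Addr) : PresentedGroup relsA) *
      (evP (shiftW w) * PresentedGroup.of ([] : Addr)) =
    evP (shiftW (shiftW w)) *
      (PresentedGroup.of [true] *
        (PresentedGroup.of ([] : Addr) * PresentedGroup.of [false])) := by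
  rw [← mul_assoc, slide2, mul_assoc]
  congr 1
  simpa [mul_assoc] using rel5 ([] : Addr)

lemma key_left_star (δ : Addr) (w : Word) :
    (PresentedGroup.of (false :: δ) : PresentedGroup relsA) *
      (evP (shiftW w) * PresentedGroup.of ([] : Addr)) =
    evP (shiftW w) *
      (PresentedGroup.of ([] : Addr) * PresentedGroup.of (false :: false :: δ)) := by
  rw [← mul_assoc, slide_comm, mul_assoc]
  congr 1
  simpa using rel4 [] δ

lemma key_right_star (δ : Addr) :
    (PresentedGroup.of (true :: false :: δ) : PresentedGroup relsA) *
      PresentedGroup.of ([] : Addr) =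
    PresentedGroup.of ([] : Addr) * PresentedGroup.of (false :: true :: δ) := by
  simpa using rel3 [] δ

/-- Lemma 2.12: if `t' = t • A_α`, then `w_{t'} ≡_{R_A} w_t · A_α` and
`w_{t'}* ≡_{R_A} w_t* · A_{0α}`. -/
theorem stmt8 (t t' : BTree) (α : Addr) (h : applyAt α opA t = some t') :
    evP (wt t') = evP (wt t ++ [α]) ∧
    evP (wts t') = evP (wts t ++ [false :: α]) := by
  induction t generalizing t' α with
  | leaf =>
    exfalso
    cases α with
    | nil => simp [applyAt, opA] at h
    | cons b β => cases b <;> simp [applyAt] at h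
  | node t₁ t₂ ih₁ ih₂ =>
    open PresentedGroup in
    cases α with
    | nil =>
      cases t₂ with
      | leaf => simp [applyAt, opA] at h
      | node t₂ t₃ =>
        simp only [applyAt, opA, Option.some.injEq] at h
        subst h
        constructor
        · simp only [wt_node, wts_node, shiftW_append, shiftW_cons, shiftW_nil, evP_append, evP_singleton, mul_assoc]
          rw [slide2]
        · simp only [wt_node, wts_node, shiftW_append, shiftW_cons, shiftW_nil, evP_append, evP_singleton, mul_assoc]
          rw [key_root_star]
    | cons b β =>
      cases b with
      | false =>
        simp only [applyAt, Option.map_eq_some_iff] at h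
        obtain ⟨t₁', h₁, rfl⟩ := h
        obtain ⟨ih₁1, ih₁2⟩ := ih₁ t₁' β h₁
        constructor
        · simp only [wt_node, evP_append, evP_singleton, ih₁2, mul_assoc]
          rw [slide_comm]
        · simp only [wts_node, evP_append, evP_singleton, ih₁2, mul_assoc]
          rw [key_left_star]
      | true =>
        simp only [applyAt, Option.map_eq_some_iff] at h
        obtain ⟨t₂', h₂, rfl⟩ := h
        obtain ⟨ih₂1, ih₂2⟩ := ih₂ t₂' β h₂
        constructor
        · simp only [wt_node, evP_append, evP_singleton, ← shiftHom_evP, ih₂1,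
            map_mul, shiftHom_of, mul_assoc]
        · simp only [wts_node, evP_append, evP_singleton, ← shiftHom_evP, ih₂2,
            map_mul, shiftHom_of, mul_assoc]
          rw [key_right_star]
end
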